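/- The bidding mechanism of Algorithm 1 is truthful: for every client e with private true cost c_e > 0, defining e's utility as p_e − c_e if e is selected as a winner (with the winner set and payment computed from the declared bids) and 0 otherwise, declaring the truthful bid b_e = c_e yields utility at least as large as the utility obtained by declaring any other bid b'_e ≠ c_e, for any fixed bids of the other clients. -/
import Mathlib


open scoped Classical

/-!
Truthfulness of the bidding mechanism of Algorithm 1: for a client `e` with
private true cost `c > 0`, whose utility is `p_e - c` when selected as a
winner (with winner set and payment computed from the declared bids) and `0`
otherwise, declaring the truthful bid `b_e = c` yields utility at least as
large as declaring any other bid `β ≠ c`, for any fixed bids of the other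
clients.  Note that the payment `p_e` is computed from the list `V^{-e}` of
the other clients only, hence does not depend on `e`'s declared bid.
-/

/-- The budget-constraint condition at position `j` of a list of
scores/bids sorted in nonincreasing order of score per bid:
`b j ≤ (R/2) · u j / U({1,…,j})`. -/
def winsAt (n : ℕ) (u b : Fin n → ℝ) (R : ℝ) (j : Fin n) : Prop :=
  b j ≤ R / 2 * u j / ∑ i ∈ Finset.Iic j, u i

/-- The client at position `e` is selected as a winner by Algorithm 1:
every position of the prefix ending at `e` satisfies the budget-constraint
condition, so `e` belongs to the longest feasible prefix `S_k`. -/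
def isWinner (n : ℕ) (u b : Fin n → ℝ) (R : ℝ) (e : Fin n) : Prop :=
  ∀ j ≤ e, winsAt n u b R j

private lemma sumIic_pos {m : ℕ} (u : Fin m → ℝ) (hu : ∀ i, 0 < u i) (j : Fin m) :
    0 < ∑ i ∈ Finset.Iic j, u i :=
  Finset.sum_pos (fun i _ => hu i) ⟨j, Finset.mem_Iic.2 le_rfl⟩

private lemma winsAt_iff {m : ℕ} (u b : Fin m → ℝ) (R : ℝ) (j : Fin m)
    (hbj : 0 < b j) (hu : ∀ i, 0 < u i) :
    winsAt m u b R j ↔ ∑ i ∈ Finset.Iic j, u i ≤ R / 2 * (u j / b j) := by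
  unfold winsAt
  rw [le_div_iff₀ (sumIic_pos u hu j), ← mul_div_assoc, le_div_iff₀ hbj, mul_comm (b j)]

private lemma key_le {n : ℕ} (u b : Fin (n + 1) → ℝ) (R : ℝ) (hR : 0 < R)
    (hu : ∀ i, 0 < u i) (e : Fin (n + 1))
    (hb : ∀ i, i ≠ e → 0 < b i)
    (c : ℝ) (hc : 0 < c) (v : Fin n)
    (hv₂ : ¬ winsAt n (u ∘ e.succAbove) (b ∘ e.succAbove) R v)
    (σt : Equiv.Perm (Fin (n + 1)))
    (hst : ∀ i j : Fin (n + 1), i ≤ j →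
      u (σt j) / Function.update b e c (σt j) ≤
        u (σt i) / Function.update b e c (σt i))
    (hw : isWinner (n + 1) (u ∘ σt) (Function.update b e c ∘ σt) R (σt.symm e)) :
    c ≤ (Finset.Iic v).sup' ⟨v, Finset.mem_Iic.2 le_rfl⟩ (fun j =>
      min (u e * b (e.succAbove j) / u (e.succAbove j))
          (R / 2 * u e / ((∑ i ∈ Finset.Iio j, u (e.succAbove i)) + u e))) := by
  have hσtt : σt (σt.symm e) = e := σt.apply_symm_apply e
  set t := σt.symm e with ht
  have hwt := hw t le_rfl
  rw [winsAt_iff (u ∘ σt) _ R t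
      (by rw [Function.comp_apply, hσtt, Function.update_self]; exact hc)
      (fun i => hu _)] at hwt
  simp only [Function.comp_apply] at hwt
  rw [hσtt, Function.update_self] at hwt
  -- hwt : ∑ i ∈ Iic t, u (σt i) ≤ R / 2 * (u e / c)
  set K : Finset (Fin (n + 1)) := (Finset.Iio t).image σt with hK
  have hsumK : ∑ i ∈ Finset.Iic t, u (σt i) = u e + ∑ x ∈ K, u x := by
    rw [← Finset.Iio_insert t, Finset.sum_insert (by simp), hσtt, hK,
      Finset.sum_image (fun x _ y _ h => σt.injective h)]
  rw [hsumK] at hwt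
  -- hwt : u e + ∑ x ∈ K, u x ≤ R / 2 * (u e / c)
  by_cases hcase : ∀ i ∈ Finset.Iic v, e.succAbove i ∈ K
  · exfalso
    have h1 : ∑ i ∈ Finset.Iic v, u (e.succAbove i) ≤ ∑ x ∈ K, u x := by
      rw [← Finset.sum_image (g := e.succAbove) (f := u)
        (fun x _ y _ h => Fin.succAbove_right_injective h)]
      refine Finset.sum_le_sum_of_subset_of_nonneg ?_ (fun i _ _ => (hu i).le)
      intro x hx
      obtain ⟨i, hi, rfl⟩ := Finset.mem_image.1 hx
      exact hcase i hi
    obtain ⟨s, hs, hσs⟩ := Finset.mem_image.1 (hcase v (Finset.mem_Iic.2 le_rfl))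
    have hratio := hst s t (Finset.mem_Iio.1 hs).le
    rw [hσtt, Function.update_self, hσs,
      Function.update_of_ne (Fin.succAbove_ne e v)] at hratio
    -- hratio : u e / c ≤ u (succAbove v) / b (succAbove v)
    rw [winsAt_iff (u ∘ e.succAbove) (b ∘ e.succAbove) R v
      (hb _ (Fin.succAbove_ne e v)) (fun i => hu _), not_le] at hv₂
    simp only [Function.comp_apply] at hv₂
    have hmul : R / 2 * (u e / c) ≤
        R / 2 * (u (e.succAbove v) / b (e.succAbove v)) :=
      mul_le_mul_of_nonneg_left hratio (by positivity)
    have := hu e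
    linarith
  · push_neg at hcase
    obtain ⟨i0, hi0v, hi0K⟩ := hcase
    set T := (Finset.Iic v).filter (fun i => e.succAbove i ∉ K) with hT
    have hTne : T.Nonempty := ⟨i0, Finset.mem_filter.2 ⟨hi0v, hi0K⟩⟩
    set j0 := T.min' hTne with hj0
    have hj0T : j0 ∈ T := T.min'_mem hTne
    have hj0v : j0 ∈ Finset.Iic v := (Finset.mem_filter.1 hj0T).1
    have hj0K : e.succAbove j0 ∉ K := (Finset.mem_filter.1 hj0T).2
    have hIio : ∀ i : Fin n, i < j0 → e.succAbove i ∈ K := by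
      intro i hi
      by_contra hiK
      have hiT : i ∈ T := Finset.mem_filter.2
        ⟨Finset.mem_Iic.2 (le_trans hi.le (Finset.mem_Iic.1 hj0v)), hiK⟩
      exact absurd (T.min'_le i hiT) (not_le.2 hi)
    have h2 : ∑ i ∈ Finset.Iio j0, u (e.succAbove i) ≤ ∑ x ∈ K, u x := by
      rw [← Finset.sum_image (g := e.succAbove) (f := u)
        (fun x _ y _ h => Fin.succAbove_right_injective h)]
      refine Finset.sum_le_sum_of_subset_of_nonneg ?_ (fun i _ _ => (hu i).le)
      intro x hx
      obtain ⟨i, hi, rfl⟩ := Finset.mem_image.1 hx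
      exact hIio i (Finset.mem_Iio.1 hi)
    have hS0pos : 0 < (∑ i ∈ Finset.Iio j0, u (e.succAbove i)) + u e := by
      have h4 := Finset.sum_nonneg (fun i (_ : i ∈ Finset.Iio j0) => (hu (e.succAbove i)).le)
      have := hu e
      linarith
    have hbeta : c ≤ R / 2 * u e / ((∑ i ∈ Finset.Iio j0, u (e.succAbove i)) + u e) := by
      rw [le_div_iff₀ hS0pos]
      have h3 : (∑ i ∈ Finset.Iio j0, u (e.succAbove i)) + u e ≤ R / 2 * (u e / c) := by
        linarith
      rw [← mul_div_assoc, le_div_iff₀ hc] at h3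
      linarith [mul_comm c ((∑ i ∈ Finset.Iio j0, u (e.succAbove i)) + u e)]
    have hposj : t ≤ σt.symm (e.succAbove j0) := by
      by_contra h
      push_neg at h
      exact hj0K (Finset.mem_image.2 ⟨_, Finset.mem_Iio.2 h, σt.apply_symm_apply _⟩)
    have hratio := hst t _ hposj
    rw [σt.apply_symm_apply, hσtt, Function.update_self,
      Function.update_of_ne (Fin.succAbove_ne e j0)] at hratio
    -- hratio : u (succAbove j0)/b (succAbove j0) ≤ u e / c
    have hlam : c ≤ u e * b (e.succAbove j0) / u (e.succAbove j0) := by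
      rw [le_div_iff₀ (hu _)]
      have h5 := (div_le_div_iff₀ (hb _ (Fin.succAbove_ne e j0)) hc).1 hratio
      linarith [mul_comm c (u (e.succAbove j0))]
    refine le_trans (le_min hlam hbeta) (Finset.le_sup' (fun j =>
      min (u e * b (e.succAbove j) / u (e.succAbove j))
          (R / 2 * u e / ((∑ i ∈ Finset.Iio j, u (e.succAbove i)) + u e))) hj0v)

private lemma key_win {n : ℕ} (u b : Fin (n + 1) → ℝ) (R : ℝ) (hR : 0 < R)
    (hu : ∀ i, 0 < u i) (e : Fin (n + 1))
    (hb : ∀ i, i ≠ e → 0 < b i)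
    (hsorted : ∀ i j : Fin n, i ≤ j →
      u (e.succAbove j) / b (e.succAbove j) ≤
        u (e.succAbove i) / b (e.succAbove i))
    (c : ℝ) (hc : 0 < c) (v : Fin n)
    (hv₁ : ∀ j : Fin n, j < v →
      winsAt n (u ∘ e.succAbove) (b ∘ e.succAbove) R j)
    (σt : Equiv.Perm (Fin (n + 1)))
    (hst : ∀ i j : Fin (n + 1), i ≤ j →
      u (σt j) / Function.update b e c (σt j) ≤
        u (σt i) / Function.update b e c (σt i))
    (hcp : c < (Finset.Iic v).sup' ⟨v, Finset.mem_Iic.2 le_rfl⟩ (fun j =>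
      min (u e * b (e.succAbove j) / u (e.succAbove j))
          (R / 2 * u e / ((∑ i ∈ Finset.Iio j, u (e.succAbove i)) + u e)))) :
    isWinner (n + 1) (u ∘ σt) (Function.update b e c ∘ σt) R (σt.symm e) := by
  obtain ⟨j, hjv, hj⟩ := (Finset.lt_sup'_iff _).1 hcp
  rw [lt_min_iff] at hj
  obtain ⟨hlam, hbeta⟩ := hj
  have hjv' : j ≤ v := Finset.mem_Iic.1 hjv
  have hbj : 0 < b (e.succAbove j) := hb _ (Fin.succAbove_ne e j)
  have hrj : u (e.succAbove j) / b (e.succAbove j) < u e / c := by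
    rw [div_lt_div_iff₀ hbj hc]
    rw [lt_div_iff₀ (hu _)] at hlam
    linarith [mul_comm c (u (e.succAbove j))]
  have hσtt : σt (σt.symm e) = e := σt.apply_symm_apply e
  set t := σt.symm e with ht
  have hK : ∀ s : Fin (n + 1), s < t → ∃ i : Fin n, i < j ∧ e.succAbove i = σt s := by
    intro s hs
    have hne : σt s ≠ e := by
      intro h
      exact absurd (σt.injective (h.trans hσtt.symm)) (ne_of_lt hs)
    obtain ⟨i, hi⟩ := Fin.exists_succAbove_eq hne
    refine ⟨i, ?_, hi⟩
    by_contra hji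
    push_neg at hji
    have h1 := hsorted j i hji
    have h2 := hst s t hs.le
    rw [hσtt, Function.update_self, ← hi,
      Function.update_of_ne (Fin.succAbove_ne e i)] at h2
    linarith
  intro s hs
  rcases eq_or_lt_of_le hs with heq | hslt
  · rw [heq]
    rw [winsAt_iff (u ∘ σt) _ R t
        (by rw [Function.comp_apply, hσtt, Function.update_self]; exact hc)
        (fun i => hu _)]
    simp only [Function.comp_apply]
    rw [hσtt, Function.update_self]
    have hsumK : ∑ i ∈ Finset.Iic t, u (σt i)
        = u e + ∑ x ∈ (Finset.Iio t).image σt, u x := by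
      rw [← Finset.Iio_insert t, Finset.sum_insert (by simp), hσtt,
        Finset.sum_image (fun x _ y _ h => σt.injective h)]
    have hsub : (Finset.Iio t).image σt ⊆ (Finset.Iio j).image e.succAbove := by
      intro x hx
      obtain ⟨s', hs', rfl⟩ := Finset.mem_image.1 hx
      obtain ⟨i, hij, hi⟩ := hK s' (Finset.mem_Iio.1 hs')
      exact Finset.mem_image.2 ⟨i, Finset.mem_Iio.2 hij, hi⟩
    have h6 : ∑ x ∈ (Finset.Iio t).image σt, u x
        ≤ ∑ i ∈ Finset.Iio j, u (e.succAbove i) := by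
      rw [← Finset.sum_image (g := e.succAbove) (f := u)
        (fun x _ y _ h => Fin.succAbove_right_injective h)]
      exact Finset.sum_le_sum_of_subset_of_nonneg hsub (fun i _ _ => (hu i).le)
    have hS0pos : 0 < (∑ i ∈ Finset.Iio j, u (e.succAbove i)) + u e := by
      have h4 := Finset.sum_nonneg (fun i (_ : i ∈ Finset.Iio j) => (hu (e.succAbove i)).le)
      have := hu e; linarith
    rw [lt_div_iff₀ hS0pos] at hbeta
    rw [hsumK, ← mul_div_assoc, le_div_iff₀ hc]
    linarith [mul_le_mul_of_nonneg_right h6 hc.le]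
  · obtain ⟨ix, hixj, hix⟩ := hK s hslt
    have hxne : σt s ≠ e := by rw [← hix]; exact Fin.succAbove_ne e ix
    rw [winsAt_iff (u ∘ σt) _ R s
        (by rw [Function.comp_apply, Function.update_of_ne hxne]; exact hb _ hxne)
        (fun i => hu _)]
    simp only [Function.comp_apply]
    rw [Function.update_of_ne hxne]
    -- goal : ∑ i ∈ Iic s, u (σt i) ≤ R / 2 * (u (σt s) / b (σt s))
    classical
    set g : Fin (n + 1) → Fin n := fun y => ((finSuccEquiv' e) y).getD ix with hg
    have hgsa : ∀ i : Fin n, g (e.succAbove i) = i := by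
      intro i
      rw [hg]
      simp only [finSuccEquiv'_succAbove, Option.getD_some]
    have hgex : ∀ x ∈ (Finset.Iic s).image σt,
        ∃ i : Fin n, i < j ∧ e.succAbove i = x := by
      intro x hx
      obtain ⟨s', hs', rfl⟩ := Finset.mem_image.1 hx
      exact hK s' (lt_of_le_of_lt (Finset.mem_Iic.1 hs') hslt)
    have hIne : (((Finset.Iic s).image σt).image g).Nonempty :=
      ⟨g (σt s), Finset.mem_image.2 ⟨σt s,
        Finset.mem_image.2 ⟨s, Finset.mem_Iic.2 le_rfl, rfl⟩, rfl⟩⟩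
    set imax := (((Finset.Iic s).image σt).image g).max' hIne with himax
    have himaxI := (((Finset.Iic s).image σt).image g).max'_mem hIne
    have himaxj : imax < j := by
      obtain ⟨x, hx, hgx⟩ := Finset.mem_image.1 himaxI
      obtain ⟨i, hij, hi⟩ := hgex x hx
      have hgxi : g x = i := by rw [← hi, hgsa]
      rw [himax, ← hgx, hgxi]
      exact hij
    have hsubI : (Finset.Iic s).image σt ⊆ (Finset.Iic imax).image e.succAbove := by
      intro x hx
      obtain ⟨i, hij, hi⟩ := hgex x hx
      have hgx : g x ∈ ((Finset.Iic s).image σt).image g :=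
        Finset.mem_image.2 ⟨x, hx, rfl⟩
      have hgxi : g x = i := by rw [← hi, hgsa]
      have h8 : i ≤ imax := by
        rw [himax, ← hgxi]
        exact Finset.le_max' _ _ hgx
      exact Finset.mem_image.2 ⟨i, Finset.mem_Iic.2 h8, hi⟩
    have hsum9 : ∑ i ∈ Finset.Iic s, u (σt i)
        ≤ ∑ i ∈ Finset.Iic imax, u (e.succAbove i) := by
      rw [← Finset.sum_image (g := σt) (f := u) (fun x _ y _ h => σt.injective h),
        ← Finset.sum_image (g := e.succAbove) (f := u)
          (fun x _ y _ h => Fin.succAbove_right_injective h)]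
      exact Finset.sum_le_sum_of_subset_of_nonneg hsubI (fun i _ _ => (hu i).le)
    have hwin := hv₁ imax (lt_of_lt_of_le himaxj hjv')
    rw [winsAt_iff (u ∘ e.succAbove) (b ∘ e.succAbove) R imax
      (hb _ (Fin.succAbove_ne e imax)) (fun i => hu _)] at hwin
    simp only [Function.comp_apply] at hwin
    have hixmem : ix ∈ ((Finset.Iic s).image σt).image g := by
      refine Finset.mem_image.2 ⟨σt s, Finset.mem_image.2 ⟨s, Finset.mem_Iic.2 le_rfl, rfl⟩, ?_⟩
      rw [← hix, hgsa]
    have hixle : ix ≤ imax := Finset.le_max' _ _ hixmem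
    have hr9 := hsorted ix imax hixle
    have hmul9 : R / 2 * (u (e.succAbove imax) / b (e.succAbove imax))
        ≤ R / 2 * (u (e.succAbove ix) / b (e.succAbove ix)) :=
      mul_le_mul_of_nonneg_left hr9 (by positivity)
    rw [← hix]
    linarith

theorem mechanism_truthful
    (n : ℕ) (u b : Fin (n + 1) → ℝ) (R : ℝ) (hR : 0 < R)
    (hu : ∀ i, 0 < u i)
    (e : Fin (n + 1))
    -- the other clients have positive bids, and are sorted (in the list
    -- `V^{-e}`, i.e. `j ↦ e.succAbove j`) in nonincreasing order of
    -- score per bid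
    (hb : ∀ i, i ≠ e → 0 < b i)
    (hsorted : ∀ i j : Fin n, i ≤ j →
      u (e.succAbove j) / b (e.succAbove j) ≤
        u (e.succAbove i) / b (e.succAbove i))
    -- `e`'s private true cost
    (c : ℝ) (hc : 0 < c)
    -- `v` is the position (0-based) of the first client of `V^{-e}` violating
    -- the budget-constraint condition: the first `k̂ = v` clients satisfy it
    (v : Fin n)
    (hv₁ : ∀ j : Fin n, j < v →
      winsAt n (u ∘ e.succAbove) (b ∘ e.succAbove) R j)
    (hv₂ : ¬ winsAt n (u ∘ e.succAbove) (b ∘ e.succAbove) R v)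
    -- the payment `p = p_e = max_{1 ≤ j ≤ k̂+1} min {λ_{e(j)}, β_{e(j)}}`,
    -- computed from the other clients' bids only
    (p : ℝ)
    (hp : p = (Finset.Iic v).sup' ⟨v, Finset.mem_Iic.2 le_rfl⟩ (fun j =>
      min (u e * b (e.succAbove j) / u (e.succAbove j))
          (R / 2 * u e / ((∑ i ∈ Finset.Iio j, u (e.succAbove i)) + u e)))) :
    -- for every alternative declared bid `β ≠ c`, with the bid profiles
    -- re-sorted in nonincreasing order of score per bid via permutations
    -- `σt` (truthful profile) and `σd` (deviating profile), the utility of the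
    -- truthful bid is at least the utility of the deviating bid
    ∀ β : ℝ, β ≠ c → 0 < β →
      ∀ σt σd : Equiv.Perm (Fin (n + 1)),
        (∀ i j : Fin (n + 1), i ≤ j →
          u (σt j) / Function.update b e c (σt j) ≤
            u (σt i) / Function.update b e c (σt i)) →
        (∀ i j : Fin (n + 1), i ≤ j →
          u (σd j) / Function.update b e β (σd j) ≤
            u (σd i) / Function.update b e β (σd i)) →
        (if isWinner (n + 1) (u ∘ σd) (Function.update b e β ∘ σd) R
            (σd.symm e) then p - c else 0) ≤
        (if isWinner (n + 1) (u ∘ σt) (Function.update b e c ∘ σt) R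
            (σt.symm e) then p - c else 0) := by
  
  intro β hβ hβpos σt σd hst hsd
  by_cases htw : isWinner (n + 1) (u ∘ σt) (Function.update b e c ∘ σt) R (σt.symm e)
  · rw [if_pos htw]
    have hcp : c ≤ p := by
      rw [hp]
      exact key_le u b R hR hu e hb c hc v hv₂ σt hst htw
    split_ifs with h
    · exact le_rfl
    · linarith
  · rw [if_neg htw]
    have hpc : p ≤ c := by
      by_contra h
      push_neg at h
      rw [hp] at h
      exact htw (key_win u b R hR hu e hb hsorted c hc v hv₁ σt hst h)
    split_ifs with h
    · linarith
    · exact le_rfl
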